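/- There exists a vector ξ ∈ 𝒳 such that α ≤ R₀ = ‖N ξ‖ ≤ β, where α is the smallest column sum of the newborn submatrix N̄ (α = min_{j} ∑_{i=1}^n N̄_{ij}) and β is the largest column sum of N̄ (β = max_{j} ∑_{i=1}^n N̄_{ij}). -/

import Mathlib

open Matrix BigOperators

/-- Spectral radius of a real square matrix: the maximum modulus of its complex
eigenvalues (elements of the spectrum of the matrix viewed over `ℂ`). -/
noncomputable def specRad {ι : Type*} [Fintype ι] [DecidableEq ι]
    (M : Matrix ι ι ℝ) : ℝ :=
  sSup {r : ℝ | ∃ μ : ℂ, μ ∈ spectrum ℂ (M.map Complex.ofReal) ∧ r = ‖μ‖}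

/-- The induced `L¹` operator norm of a real matrix: the maximum absolute column sum. -/
noncomputable def colNorm {ι : Type*} [Fintype ι] (M : Matrix ι ι ℝ) : ℝ :=
  ⨆ q, ∑ p, |M p q|

/-- Local fecundity matrix: first row `(f 0, …, f (m-1))`, other rows zero. -/
def localF (m : ℕ) (f : Fin m → ℝ) : Matrix (Fin m) (Fin m) ℝ :=
  Matrix.of fun k' k => if (k' : ℕ) = 0 then f k else 0

/-- Local survival matrix: diagonal entries `sd k`, subdiagonal entries `ss k`,
all other entries zero. -/
def localS (m : ℕ) (sd ss : Fin m → ℝ) : Matrix (Fin m) (Fin m) ℝ :=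
  Matrix.of fun k' k =>
    if k' = k then sd k else if (k' : ℕ) = (k : ℕ) + 1 then ss k else 0

/-- Global (block-diagonal) fecundity matrix `F = ⊕ᵢ Fⁱ`, indexed by
(stage, patch) pairs. -/
def fecMat (m n : ℕ) (f : Fin m → Fin n → ℝ) :
    Matrix (Fin m × Fin n) (Fin m × Fin n) ℝ :=
  Matrix.of fun p q =>
    if p.2 = q.2 then localF m (fun k => f k q.2) p.1 q.1 else 0

/-- Global (block-diagonal) survival matrix `S = ⊕ᵢ Sⁱ`. -/
def survMat (m n : ℕ) (sd ss : Fin m → Fin n → ℝ) :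
    Matrix (Fin m × Fin n) (Fin m × Fin n) ℝ :=
  Matrix.of fun p q =>
    if p.2 = q.2 then localS m (fun k => sd k q.2) (fun k => ss k q.2) p.1 q.1 else 0

/-- Global dispersion matrix: the `(i,j)` patch block is `diag (d 0 i j, …, d (m-1) i j)`. -/
def dispMat (m n : ℕ) (d : Fin m → Fin n → Fin n → ℝ) :
    Matrix (Fin m × Fin n) (Fin m × Fin n) ℝ :=
  Matrix.of fun p q => if p.1 = q.1 then d q.1 p.2 q.2 else 0

/-- Next-generation matrix `N = D F (I - D S)⁻¹`. -/
noncomputable def nextGen (m n : ℕ) (f : Fin m → Fin n → ℝ)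
    (sd ss : Fin m → Fin n → ℝ) (d : Fin m → Fin n → Fin n → ℝ) :
    Matrix (Fin m × Fin n) (Fin m × Fin n) ℝ :=
  dispMat m n d * fecMat m n f * (1 - dispMat m n d * survMat m n sd ss)⁻¹

/-- Partial next-generation matrix `W = F (I - D S)⁻¹`. -/
noncomputable def partGen (m n : ℕ) (f : Fin m → Fin n → ℝ)
    (sd ss : Fin m → Fin n → ℝ) (d : Fin m → Fin n → Fin n → ℝ) :
    Matrix (Fin m × Fin n) (Fin m × Fin n) ℝ :=
  fecMat m n f * (1 - dispMat m n d * survMat m n sd ss)⁻¹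

/-- Newborn submatrix: keep only the rows and columns with stage index `0`
(the newborn indices). -/
def newbornSub {m n : ℕ} (hm : 0 < m)
    (B : Matrix (Fin m × Fin n) (Fin m × Fin n) ℝ) : Matrix (Fin n) (Fin n) ℝ :=
  Matrix.of fun i j => B (⟨0, hm⟩, i) (⟨0, hm⟩, j)

/-- The alternative net reproductive number `R̂₀ = max_{x ∈ 𝒳} ‖N x‖`, where `𝒳`
is the set of nonnegative `L¹`-unit vectors supported on the newborn indices. -/
noncomputable def altR0 (m n : ℕ)
    (N : Matrix (Fin m × Fin n) (Fin m × Fin n) ℝ) : ℝ :=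
  sSup {r : ℝ | ∃ x : Fin m × Fin n → ℝ, (∀ p, 0 ≤ x p) ∧ (∑ p, |x p|) = 1 ∧
    (∀ p : Fin m × Fin n, (p.1 : ℕ) ≠ 0 → x p = 0) ∧ r = ∑ p, |N.mulVec x p|}


section Aux

variable {ι : Type*} [Fintype ι] [DecidableEq ι]

attribute [local instance] Matrix.linftyOpNormedRing Matrix.linftyOpNormedAddCommGroup

local instance : CompleteSpace (Matrix ι ι ℝ) :=
  (by infer_instance : CompleteSpace (ι → ι → ℝ))

lemma auxPowEntries (A : Matrix ι ι ℝ) (h0 : ∀ i j, 0 ≤ A i j) :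
    ∀ (k : ℕ) (i j : ι), 0 ≤ (A ^ k) i j := by
  intro k
  induction k with
  | zero => intro i j; by_cases h : i = j <;> simp [pow_zero, Matrix.one_apply, h]
  | succ k ih =>
    intro i j
    rw [pow_succ, Matrix.mul_apply]
    exact Finset.sum_nonneg fun l _ => mul_nonneg (ih i l) (h0 l j)

lemma auxOneSubInvNonneg (A : Matrix ι ι ℝ)
    (h0 : ∀ i j, 0 ≤ A i j) (hrow : ∀ i, ∑ j, A i j < 1) :
    ∀ i j, 0 ≤ (1 - A)⁻¹ i j := by
  have hnorm : ‖A‖ < 1 := by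
    rw [Matrix.linfty_opNorm_def]
    rw [show (1 : ℝ) = ((1 : NNReal) : ℝ) by norm_num, NNReal.coe_lt_coe]
    refine Finset.sup_lt_iff (by norm_num) |>.2 fun i _ => ?_
    rw [← NNReal.coe_lt_coe]
    push_cast
    calc ∑ j, ‖A i j‖ = ∑ j, A i j := by
          refine Finset.sum_congr rfl fun j _ => ?_
          rw [Real.norm_eq_abs, abs_of_nonneg (h0 i j)]
      _ < 1 := hrow i
  intro i j
  have hsum : HasSum (fun k : ℕ => A ^ k) (Ring.inverse (1 - A)) :=
    @hasSum_geom_series_inverse _ _ (@instHasSummableGeomSeriesOfCompleteSpace _ _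
      (by exact (inferInstance : CompleteSpace (ι → ι → ℝ)))) A hnorm
  have hinv : (1 - A)⁻¹ = Ring.inverse (1 - A) := Matrix.nonsing_inv_eq_ringInverse _
  have hcont : Continuous fun M : Matrix ι ι ℝ => M i j := by
    exact ((continuous_apply j).comp (continuous_apply i) :
      Continuous fun M : ι → ι → ℝ => M i j)
  have hentry : HasSum (fun k : ℕ => (A ^ k) i j) ((Ring.inverse (1 - A)) i j) :=
    hsum.map (AddMonoidHom.mk' (fun M : Matrix ι ι ℝ => M i j) (fun x y => rfl)) hcont
  rw [hinv]
  exact hasSum_le (fun k => auxPowEntries A h0 k i j) hasSum_zero hentry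

lemma auxMemSpectrumIff (B : Matrix ι ι ℂ) (μ : ℂ) :
    μ ∈ spectrum ℂ B ↔ ∃ v : ι → ℂ, v ≠ 0 ∧ B *ᵥ v = μ • v := by
  rw [spectrum.mem_iff, Matrix.isUnit_iff_isUnit_det, isUnit_iff_ne_zero, not_not,
    ← Matrix.exists_mulVec_eq_zero_iff]
  constructor
  · rintro ⟨v, hv, heq⟩
    refine ⟨v, hv, ?_⟩
    have : (algebraMap ℂ (Matrix ι ι ℂ) μ - B) *ᵥ v = μ • v - B *ᵥ v := by
      rw [Matrix.sub_mulVec]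
      congr 1
      rw [Algebra.algebraMap_eq_smul_one, Matrix.smul_mulVec, Matrix.one_mulVec]
    rw [this] at heq
    rw [sub_eq_zero] at heq; exact heq.symm
  · rintro ⟨v, hv, heq⟩
    refine ⟨v, hv, ?_⟩
    rw [Matrix.sub_mulVec, Algebra.algebraMap_eq_smul_one, Matrix.smul_mulVec,
      Matrix.one_mulVec, heq, sub_self]

lemma auxSpecTranspose (A : Matrix ι ι ℂ) (μ : ℂ) :
    μ ∈ spectrum ℂ Aᵀ ↔ μ ∈ spectrum ℂ A := by
  rw [spectrum.mem_iff, spectrum.mem_iff, Matrix.isUnit_iff_isUnit_det,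
    Matrix.isUnit_iff_isUnit_det]
  have : algebraMap ℂ (Matrix ι ι ℂ) μ - Aᵀ = (algebraMap ℂ (Matrix ι ι ℂ) μ - A)ᵀ := by
    rw [Matrix.transpose_sub]
    congr 1
    rw [Matrix.algebraMap_eq_diagonal, Matrix.diagonal_transpose]
  rw [this, Matrix.det_transpose]

end Aux

lemma auxEigAbsLeColsum {n : ℕ} (B : Matrix (Fin n) (Fin n) ℝ)
    (h0 : ∀ i j, 0 ≤ B i j) (β : ℝ) (hβ : ∀ j, ∑ i, B i j ≤ β)
    (μ : ℂ) (hμ : μ ∈ spectrum ℂ (B.map Complex.ofReal)) :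
    ‖μ‖ ≤ β := by
  rw [auxMemSpectrumIff] at hμ
  obtain ⟨v, hv, heq⟩ := hμ
  have hpos : 0 < ∑ j, ‖v j‖ := by
    rcases Function.ne_iff.1 hv with ⟨j, hj⟩
    refine Finset.sum_pos' (fun j _ => norm_nonneg _) ⟨j, Finset.mem_univ j, ?_⟩
    simpa using hj
  have key : ‖μ‖ * ∑ j, ‖v j‖ ≤ β * ∑ j, ‖v j‖ := by
    calc ‖μ‖ * ∑ j, ‖v j‖
        = ∑ i, ‖μ * v i‖ := by
          rw [Finset.mul_sum]; exact Finset.sum_congr rfl fun i _ => (norm_mul _ _).symm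
      _ = ∑ i, ‖(B.map Complex.ofReal *ᵥ v) i‖ := by
          refine Finset.sum_congr rfl fun i _ => ?_
          rw [heq]; simp [Pi.smul_apply, smul_eq_mul]
      _ ≤ ∑ i, ∑ j, B i j * ‖v j‖ := by
          refine Finset.sum_le_sum fun i _ => ?_
          rw [Matrix.mulVec, dotProduct]
          refine (norm_sum_le _ _).trans ?_
          refine Finset.sum_le_sum fun j _ => ?_
          rw [Matrix.map_apply, norm_mul, Complex.norm_real, Real.norm_eq_abs,
            abs_of_nonneg (h0 i j)]
      _ = ∑ j, (∑ i, B i j) * ‖v j‖ := by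
          rw [Finset.sum_comm]
          exact Finset.sum_congr rfl fun j _ => (Finset.sum_mul _ _ _).symm
      _ ≤ ∑ j, β * ‖v j‖ := by
          refine Finset.sum_le_sum fun j _ => ?_
          exact mul_le_mul_of_nonneg_right (hβ j) (norm_nonneg _)
      _ = β * ∑ j, ‖v j‖ := by rw [Finset.mul_sum]
  exact le_of_mul_le_mul_right key hpos

section Gelfand

attribute [local instance] Matrix.linftyOpNormedRing Matrix.linftyOpNormedAlgebra
  Matrix.linftyOpNormedAddCommGroup

variable {n : ℕ}

local instance : CompleteSpace (Matrix (Fin n) (Fin n) ℂ) :=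
  (by infer_instance : CompleteSpace (Fin n → Fin n → ℂ))

lemma auxExistsEigGeColsum (hn : 0 < n) (B : Matrix (Fin n) (Fin n) ℝ)
    (h0 : ∀ i j, 0 ≤ B i j) (α : ℝ) (hα0 : 0 ≤ α) (hα : ∀ j, α ≤ ∑ i, B i j) :
    ∃ μ ∈ spectrum ℂ (B.map Complex.ofReal), α ≤ ‖μ‖ := by
  haveI : Nonempty (Fin n) := Fin.pos_iff_nonempty.1 hn
  haveI : Nontrivial (Matrix (Fin n) (Fin n) ℂ) := by
    refine ⟨0, 1, fun h => ?_⟩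
    have := congrFun (congrFun h ⟨0, hn⟩) ⟨0, hn⟩
    simp [Matrix.one_apply] at this
  have hcolpow : ∀ (k : ℕ) (j : Fin n), α ^ k ≤ ∑ i, (B ^ k) i j := by
    intro k
    induction k with
    | zero => intro j; simp [Finset.sum_eq_single j, Matrix.one_apply]
    | succ k ih =>
      intro j
      have hswap : ∑ i, (B ^ (k + 1)) i j = ∑ l, (∑ i, B i l) * ((B ^ k) l j) := by
        rw [pow_succ']
        simp_rw [Matrix.mul_apply]
        rw [Finset.sum_comm]
        exact Finset.sum_congr rfl fun l _ => by rw [Finset.sum_mul]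
      rw [hswap, pow_succ']
      calc α * α ^ k ≤ α * ∑ l, (B ^ k) l j := mul_le_mul_of_nonneg_left (ih j) hα0
        _ = ∑ l, α * (B ^ k) l j := Finset.mul_sum _ _ _
        _ ≤ ∑ l, (∑ i, B i l) * ((B ^ k) l j) := by
            refine Finset.sum_le_sum fun l _ => ?_
            exact mul_le_mul_of_nonneg_right (hα l) (auxPowEntries B h0 k l j)
  set a : Matrix (Fin n) (Fin n) ℂ := (B.map Complex.ofReal)ᵀ with ha
  have hapow : ∀ k : ℕ, a ^ k = ((B ^ k).map Complex.ofReal)ᵀ := by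
    intro k
    rw [ha, ← Matrix.transpose_pow]
    have h1 : (B.map Complex.ofReal) = Complex.ofRealHom.mapMatrix B := rfl
    rw [h1, ← map_pow]
    rfl
  have hnormge : ∀ k : ℕ, α ^ k ≤ ‖a ^ k‖ := by
    intro k
    obtain ⟨i⟩ := ‹Nonempty (Fin n)›
    rw [Matrix.linfty_opNorm_def]
    have h1 : α ^ k ≤ ((∑ j, ‖(a ^ k) i j‖₊ : NNReal) : ℝ) := by
      push_cast
      have h2 : ∀ j, ‖(a ^ k) i j‖ = (B ^ k) j i := by
        intro j
        rw [hapow k]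
        simp only [Matrix.transpose_apply, Matrix.map_apply]
        rw [Complex.norm_real, Real.norm_eq_abs,
          abs_of_nonneg (auxPowEntries B h0 k j i)]
      rw [Finset.sum_congr rfl fun j _ => h2 j]
      exact hcolpow k i
    refine h1.trans ?_
    exact NNReal.coe_le_coe.2
      (Finset.le_sup (f := fun i => ∑ j, ‖(a ^ k) i j‖₊) (Finset.mem_univ i))
  set α' : NNReal := ⟨α, hα0⟩ with hα'
  have hsr : (α' : ENNReal) ≤ spectralRadius ℂ a := by
    refine ge_of_tendsto (spectrum.pow_nnnorm_pow_one_div_tendsto_nhds_spectralRadius a) ?_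
    filter_upwards [Filter.eventually_ge_atTop 1] with k hk
    have h1 : α' ^ k ≤ ‖a ^ k‖₊ := by
      rw [← NNReal.coe_le_coe]
      push_cast
      calc (α' : ℝ) ^ k = α ^ k := rfl
        _ ≤ ‖a ^ k‖ := hnormge k
        _ = ((‖a ^ k‖₊ : NNReal) : ℝ) := rfl
    have h2 : ((α' ^ k : NNReal) : ENNReal) ≤ (‖a ^ k‖₊ : ENNReal) := by exact_mod_cast h1
    have h3 := ENNReal.rpow_le_rpow h2 (by positivity : (0:ℝ) ≤ 1 / (k : ℝ))
    have hk0 : (k : ℝ) ≠ 0 := by exact_mod_cast Nat.one_le_iff_ne_zero.1 hk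
    calc (α' : ENNReal) = ((α' ^ k : NNReal) : ENNReal) ^ (1 / (k : ℝ)) := by
          rw [ENNReal.coe_pow, ← ENNReal.rpow_natCast, ← ENNReal.rpow_mul,
            mul_one_div, div_self hk0, ENNReal.rpow_one]
      _ ≤ (‖a ^ k‖₊ : ENNReal) ^ (1 / (k : ℝ)) := h3
  obtain ⟨μ, hμmem, hμeq⟩ := spectrum.exists_nnnorm_eq_spectralRadius a
  refine ⟨μ, (auxSpecTranspose _ μ).1 hμmem, ?_⟩
  rw [← hμeq] at hsr
  have hle : α' ≤ ‖μ‖₊ := by exact_mod_cast hsr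
  calc α = (α' : ℝ) := rfl
    _ ≤ ‖μ‖ := hle
    _ = ‖μ‖ := rfl

end Gelfand

theorem stmt7
    (m n : ℕ) (hm : 2 ≤ m) (hn : 1 ≤ n)
    (f : Fin m → Fin n → ℝ) (hf : ∀ k i, 0 ≤ f k i)
    (sd ss : Fin m → Fin n → ℝ)
    (hsd : ∀ k i, 0 ≤ sd k i) (hss : ∀ k i, 0 ≤ ss k i)
    (hs1 : ∀ (k : Fin m) (i : Fin n),
      sd k i + (if (k : ℕ) + 1 < m then ss k i else 0) < 1)
    (d : Fin m → Fin n → Fin n → ℝ)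
    (hd0 : ∀ k i j, 0 ≤ d k i j) (hd1 : ∀ k i j, d k i j ≤ 1)
    (hdsum : ∀ k j, ∑ i, d k i j = 1) :
    ∃ ξ : Fin m × Fin n → ℝ,
      (∀ p, 0 ≤ ξ p) ∧ (∑ p, |ξ p|) = 1 ∧
      (∀ p : Fin m × Fin n, (p.1 : ℕ) ≠ 0 → ξ p = 0) ∧
      (⨅ j : Fin n, ∑ i : Fin n,
          newbornSub (show 0 < m by omega) (nextGen m n f sd ss d) i j) ≤
        specRad (nextGen m n f sd ss d) ∧
      specRad (nextGen m n f sd ss d) = ∑ p, |(nextGen m n f sd ss d).mulVec ξ p| ∧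
      specRad (nextGen m n f sd ss d) ≤
        ⨆ j : Fin n, ∑ i : Fin n,
          newbornSub (show 0 < m by omega) (nextGen m n f sd ss d) i j := by
  have hm0 : 0 < m := by omega
  have hn0 : 0 < n := by omega
  haveI : Nonempty (Fin n) := Fin.pos_iff_nonempty.1 hn0
  set NN := nextGen m n f sd ss d with hNN
  set D := dispMat m n d with hD
  set F := fecMat m n f with hF
  set S := survMat m n sd ss with hS
  have hNeq : NN = D * F * (1 - D * S)⁻¹ := rfl
  set z : Fin m := ⟨0, hm0⟩ with hz
  -- nonnegativity of the building blocks
  have hD0 : ∀ p q : Fin m × Fin n, 0 ≤ D p q := by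
    intro p q
    simp only [hD, dispMat, Matrix.of_apply]
    split
    · exact hd0 _ _ _
    · exact le_rfl
  have hF0 : ∀ p q : Fin m × Fin n, 0 ≤ F p q := by
    intro p q
    simp only [hF, fecMat, localF, Matrix.of_apply]
    split
    · split
      · exact hf _ _
      · exact le_rfl
    · exact le_rfl
  have hS0 : ∀ p q : Fin m × Fin n, 0 ≤ S p q := by
    intro p q
    simp only [hS, survMat, localS, Matrix.of_apply]
    split
    · split
      · exact hsd _ _
      · split
        · exact hss _ _
        · exact le_rfl
    · exact le_rfl
  -- column sums of D are 1
  have hDsum : ∀ r : Fin m × Fin n, ∑ p, D p r = 1 := by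
    intro r
    rw [Fintype.sum_prod_type]
    rw [Fintype.sum_eq_single r.1 (fun k hk => Finset.sum_eq_zero fun i _ => by
      simp only [hD, dispMat, Matrix.of_apply, if_neg hk])]
    simp only [hD, dispMat, Matrix.of_apply, if_pos rfl]
    exact hdsum r.1 r.2
  -- column sums of D * S are < 1
  have hMcol : ∀ q : Fin m × Fin n, ∑ p, (D * S) p q < 1 := by
    intro q
    have h1 : ∑ p, (D * S) p q = ∑ r, S r q := by
      simp_rw [Matrix.mul_apply]
      rw [Finset.sum_comm]
      refine Finset.sum_congr rfl fun r _ => ?_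
      rw [← Finset.sum_mul, hDsum r, one_mul]
    have h2 : ∑ r : Fin m × Fin n, S r q
        = sd q.1 q.2 + (if (q.1 : ℕ) + 1 < m then ss q.1 q.2 else 0) := by
      rw [Fintype.sum_prod_type]
      have hin : ∀ k : Fin m, ∑ l : Fin n, S (k, l) q
          = (if k = q.1 then sd q.1 q.2 else 0)
            + (if (k : ℕ) = (q.1 : ℕ) + 1 then ss q.1 q.2 else 0) := by
        intro k
        have : ∀ l : Fin n, S (k, l) q = if l = q.2 then
            (if k = q.1 then sd q.1 q.2 else
              if (k : ℕ) = (q.1 : ℕ) + 1 then ss q.1 q.2 else 0) else 0 := by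
          intro l
          simp only [hS, survMat, localS, Matrix.of_apply]
        rw [Finset.sum_congr rfl fun l _ => this l, Finset.sum_ite_eq' Finset.univ q.2,
          if_pos (Finset.mem_univ _)]
        by_cases hk : k = q.1
        · subst hk
          rw [if_pos rfl, if_pos rfl, if_neg (by omega)]
          ring
        · rw [if_neg hk, if_neg hk, zero_add]
      rw [Finset.sum_congr rfl fun k _ => hin k, Finset.sum_add_distrib,
        Finset.sum_ite_eq' Finset.univ q.1, if_pos (Finset.mem_univ _)]
      congr 1
      by_cases hlt : (q.1 : ℕ) + 1 < m
      · rw [if_pos hlt]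
        rw [Fintype.sum_eq_single (⟨(q.1 : ℕ) + 1, hlt⟩ : Fin m)
          (fun k hk => if_neg (fun hc => hk (Fin.ext hc)))]
        rw [if_pos rfl]
      · rw [if_neg hlt]
        refine Finset.sum_eq_zero fun k _ => if_neg fun hc => ?_
        have := k.isLt
        omega
    rw [h1, h2]
    exact hs1 q.1 q.2
  -- nonnegativity of (1 - D*S)⁻¹
  have hM0 : ∀ p q : Fin m × Fin n, 0 ≤ (D * S) p q := by
    intro p q
    rw [Matrix.mul_apply]
    exact Finset.sum_nonneg fun r _ => mul_nonneg (hD0 p r) (hS0 r q)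
  have hinv0 : ∀ p q : Fin m × Fin n, 0 ≤ (1 - D * S)⁻¹ p q := by
    have hT := auxOneSubInvNonneg (D * S)ᵀ (fun i j => hM0 j i)
      (fun i => by simpa [Matrix.transpose_apply] using hMcol i)
    intro p q
    have h1 : (1 - D * S)⁻¹ p q = ((1 - (D * S)ᵀ)⁻¹) q p := by
      rw [show (1 : Matrix (Fin m × Fin n) (Fin m × Fin n) ℝ) - (D * S)ᵀ = (1 - D * S)ᵀ by
        rw [Matrix.transpose_sub, Matrix.transpose_one]]
      rw [← Matrix.transpose_nonsing_inv]
      rfl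
    rw [h1]
    exact hT q p
  -- N is entrywise nonnegative
  have hN0 : ∀ p q : Fin m × Fin n, 0 ≤ NN p q := by
    intro p q
    rw [hNeq, Matrix.mul_apply]
    refine Finset.sum_nonneg fun r _ => mul_nonneg ?_ (hinv0 r q)
    rw [Matrix.mul_apply]
    exact Finset.sum_nonneg fun s _ => mul_nonneg (hD0 p s) (hF0 s r)
  -- rows of N at non-newborn indices vanish
  have hNrow : ∀ p q : Fin m × Fin n, (p.1 : ℕ) ≠ 0 → NN p q = 0 := by
    intro p q hp
    have hDF : ∀ r, (D * F) p r = 0 := by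
      intro r
      rw [Matrix.mul_apply]
      refine Finset.sum_eq_zero fun s _ => ?_
      by_cases hs : p.1 = s.1
      · have h9 : ¬ (s.1 : ℕ) = 0 := by rw [← hs]; exact hp
        have hFz : F s r = 0 := by
          simp [hF, fecMat, localF, h9]
        rw [hFz, mul_zero]
      · have hDz : D p s = 0 := by
          simp only [hD, dispMat, Matrix.of_apply, if_neg hs]
        rw [hDz, zero_mul]
    rw [hNeq, Matrix.mul_apply]
    exact Finset.sum_eq_zero fun r _ => by rw [hDF r, zero_mul]
  -- the newborn submatrix and its column sums
  set B : Matrix (Fin n) (Fin n) ℝ := newbornSub hm0 NN with hB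
  have hBN : ∀ i j, B i j = NN (z, i) (z, j) := fun i j => rfl
  have hB0 : ∀ i j, 0 ≤ B i j := fun i j => by rw [hBN]; exact hN0 _ _
  set cc : Fin n → ℝ := fun j => ∑ i, B i j with hcc
  have hc0 : ∀ j, 0 ≤ cc j := fun j => Finset.sum_nonneg fun i _ => hB0 i j
  -- total column sums of N over newborn columns
  have htot : ∀ j : Fin n, ∑ p, NN p (z, j) = cc j := by
    intro j
    rw [Fintype.sum_prod_type]
    rw [Fintype.sum_eq_single z (fun k hk => Finset.sum_eq_zero fun i _ =>
      hNrow (k, i) (z, j) (by simpa [hz, Fin.ext_iff] using hk))]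
    exact Finset.sum_congr rfl fun i _ => (hBN i j).symm
  obtain ⟨j₀, hj₀⟩ := Finite.exists_min cc
  obtain ⟨j₁, hj₁⟩ := Finite.exists_max cc
  -- the spectrum description
  have h0mem : (0 : ℝ) ∈ {r : ℝ | ∃ μ : ℂ,
      μ ∈ spectrum ℂ (NN.map Complex.ofReal) ∧ r = ‖μ‖} := by
    refine ⟨0, ?_, by simp⟩
    rw [spectrum.mem_iff, map_zero, zero_sub, IsUnit.neg_iff,
      Matrix.isUnit_iff_isUnit_det]
    have hdet : (NN.map Complex.ofReal).det = 0 :=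
      Matrix.det_eq_zero_of_row_eq_zero ((⟨1, by omega⟩ : Fin m), (⟨0, hn0⟩ : Fin n))
        (fun q => by
          rw [Matrix.map_apply, hNrow _ q (by simp)]
          simp)
    rw [hdet]
    exact fun h => by simpa using h
  -- forward spectral transfer (nonzero eigenvalues restrict to newborn block)
  have hforward : ∀ μ : ℂ, μ ≠ 0 → μ ∈ spectrum ℂ (NN.map Complex.ofReal) →
      μ ∈ spectrum ℂ (B.map Complex.ofReal) := by
    intro μ hμ hmem
    rw [auxMemSpectrumIff] at hmem ⊢
    obtain ⟨v, hv, heq⟩ := hmem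
    have hv0 : ∀ p : Fin m × Fin n, (p.1 : ℕ) ≠ 0 → v p = 0 := by
      intro p hp
      have h1 : (NN.map Complex.ofReal *ᵥ v) p = 0 := by
        rw [Matrix.mulVec, dotProduct]
        exact Finset.sum_eq_zero fun q _ => by
          rw [Matrix.map_apply, hNrow p q hp, Complex.ofReal_zero, zero_mul]
      rw [heq] at h1
      have h2 : μ * v p = 0 := h1
      rcases mul_eq_zero.1 h2 with h | h
      · exact absurd h hμ
      · exact h
    refine ⟨fun i => v (z, i), ?_, ?_⟩
    · intro hw
      apply hv
      funext p
      by_cases hp : (p.1 : ℕ) = 0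
      · have hpz : p = (z, p.2) := by
          obtain ⟨p1, p2⟩ := p
          simp only [Prod.mk.injEq]
          exact ⟨Fin.ext hp, trivial⟩
        rw [hpz]
        exact congrFun hw p.2
      · exact hv0 p hp
    · funext i
      have h2 : (NN.map Complex.ofReal *ᵥ v) (z, i) = μ * v (z, i) := by
        rw [heq]; rfl
      have h3 : (NN.map Complex.ofReal *ᵥ v) (z, i)
          = ∑ j, (B.map Complex.ofReal) i j * v (z, j) := by
        rw [Matrix.mulVec, dotProduct, Fintype.sum_prod_type]
        rw [Fintype.sum_eq_single z (fun k hk => Finset.sum_eq_zero fun j _ => by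
          rw [hv0 (k, j) (by simpa [hz, Fin.ext_iff] using hk), mul_zero])]
        rfl
      show (B.map Complex.ofReal *ᵥ fun i => v (z, i)) i = (μ • fun i => v (z, i)) i
      rw [Matrix.mulVec, dotProduct]
      rw [show ∑ j, (B.map Complex.ofReal) i j * v (z, j) = μ * v (z, i) from h3 ▸ h2]
      rfl
  -- backward spectral transfer
  have hbackward : ∀ μ : ℂ, μ ∈ spectrum ℂ (B.map Complex.ofReal) →
      μ ∈ spectrum ℂ (NN.map Complex.ofReal) := by
    intro μ hmem
    rw [auxMemSpectrumIff] at hmem ⊢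
    obtain ⟨w, hw, heq⟩ := hmem
    refine ⟨fun p => if p.1 = z then w p.2 else 0, ?_, ?_⟩
    · intro hv
      apply hw
      funext i
      have := congrFun hv (z, i)
      simpa using this
    · funext p
      by_cases hp : p.1 = z
      · obtain ⟨p1, p2⟩ := p
        simp only at hp
        subst hp
        have h3 : (NN.map Complex.ofReal *ᵥ fun q : Fin m × Fin n =>
            if q.1 = z then w q.2 else 0) (z, p2) = (B.map Complex.ofReal *ᵥ w) p2 := by
          rw [Matrix.mulVec, dotProduct, Fintype.sum_prod_type]
          rw [Fintype.sum_eq_single z (fun k hk => Finset.sum_eq_zero fun j _ => by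
            simp only [if_neg hk, mul_zero])]
          simp only [if_pos rfl]
          rfl
        rw [h3, heq]
        simp
      · have h4 : (NN.map Complex.ofReal *ᵥ fun q : Fin m × Fin n =>
            if q.1 = z then w q.2 else 0) p = 0 := by
          rw [Matrix.mulVec, dotProduct]
          refine Finset.sum_eq_zero fun q _ => ?_
          rw [Matrix.map_apply, hNrow p q (fun hc => hp (Fin.ext hc)),
            Complex.ofReal_zero, zero_mul]
        rw [h4]
        simp [hp]
  -- bounds on the spectral radius
  have hub : ∀ r ∈ {r : ℝ | ∃ μ : ℂ,
      μ ∈ spectrum ℂ (NN.map Complex.ofReal) ∧ r = ‖μ‖}, r ≤ cc j₁ := by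
    rintro r ⟨μ, hmem, rfl⟩
    by_cases hμ : μ = 0
    · subst hμ
      simpa using hc0 j₁
    · exact auxEigAbsLeColsum B hB0 (cc j₁) (fun j => hj₁ j) μ (hforward μ hμ hmem)
  have hbdd : BddAbove {r : ℝ | ∃ μ : ℂ,
      μ ∈ spectrum ℂ (NN.map Complex.ofReal) ∧ r = ‖μ‖} := ⟨cc j₁, hub⟩
  have hne : {r : ℝ | ∃ μ : ℂ,
      μ ∈ spectrum ℂ (NN.map Complex.ofReal) ∧ r = ‖μ‖}.Nonempty := ⟨0, h0mem⟩
  have hspec : specRad NN = sSup {r : ℝ | ∃ μ : ℂ,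
      μ ∈ spectrum ℂ (NN.map Complex.ofReal) ∧ r = ‖μ‖} := rfl
  have hρβ : specRad NN ≤ cc j₁ := by
    rw [hspec]; exact csSup_le hne hub
  have hαρ : cc j₀ ≤ specRad NN := by
    obtain ⟨μ, hmem, hge⟩ := auxExistsEigGeColsum hn0 B hB0 (cc j₀) (hc0 j₀)
      (fun j => hj₀ j)
    rw [hspec]
    by_cases hμ : μ = 0
    · have h5 : cc j₀ ≤ 0 := by simpa [hμ] using hge
      exact h5.trans (le_csSup hbdd h0mem)
    · exact hge.trans (le_csSup hbdd ⟨μ, hbackward μ hmem, rfl⟩)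
  -- construct the vector ξ
  set ρ : ℝ := specRad NN with hρ
  set t : ℝ := if cc j₀ = cc j₁ then 1 else (cc j₁ - ρ) / (cc j₁ - cc j₀) with htdef
  have hαβ : cc j₀ ≤ cc j₁ := hαρ.trans hρβ
  have ht0 : 0 ≤ t := by
    rw [htdef]
    split_ifs with h
    · norm_num
    · exact div_nonneg (by linarith) (by linarith)
  have ht1 : t ≤ 1 := by
    rw [htdef]
    split_ifs with h
    · exact le_rfl
    · have hlt : cc j₀ < cc j₁ := lt_of_le_of_ne hαβ h
      rw [div_le_one (by linarith)]
      linarith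
  have hcomb : t * cc j₀ + (1 - t) * cc j₁ = ρ := by
    rw [htdef]
    split_ifs with h
    · have h6 : ρ = cc j₀ := le_antisymm (by rw [hρ] at *; rw [h]; exact hρβ) hαρ
      rw [h6, h]; ring
    · have hlt : cc j₀ < cc j₁ := lt_of_le_of_ne hαβ h
      have hne' : cc j₁ - cc j₀ ≠ 0 := by linarith
      field_simp
      ring
  set ξ : Fin m × Fin n → ℝ := fun q =>
    t * (if q = (z, j₀) then 1 else 0) + (1 - t) * (if q = (z, j₁) then 1 else 0) with hξ
  have hξ0 : ∀ p, 0 ≤ ξ p := by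
    intro p
    rw [hξ]
    have h1' : (0:ℝ) ≤ (if p = (z, j₀) then (1:ℝ) else 0) := by split <;> norm_num
    have h2' : (0:ℝ) ≤ (if p = (z, j₁) then (1:ℝ) else 0) := by split <;> norm_num
    exact add_nonneg (mul_nonneg ht0 h1') (mul_nonneg (by linarith) h2')
  refine ⟨ξ, hξ0, ?_, ?_, ?_, ?_, ?_⟩
  · -- L¹ norm is 1
    calc ∑ p, |ξ p| = ∑ p, ξ p := Finset.sum_congr rfl fun p _ => abs_of_nonneg (hξ0 p)
      _ = t * ∑ p, (if p = (z, j₀) then (1:ℝ) else 0)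
          + (1 - t) * ∑ p, (if p = (z, j₁) then (1:ℝ) else 0) := by
          rw [Finset.sum_add_distrib, Finset.mul_sum, Finset.mul_sum]
      _ = 1 := by
          rw [Finset.sum_ite_eq' Finset.univ (z, j₀), Finset.sum_ite_eq' Finset.univ (z, j₁)]
          simp
  · -- supported on newborn indices
    intro p hp
    have e0 : p ≠ (z, j₀) := fun hc => hp (by rw [hc])
    have e1 : p ≠ (z, j₁) := fun hc => hp (by rw [hc])
    simp only [hξ, if_neg e0, if_neg e1]
    ring
  · -- lower bound
    exact le_trans (ciInf_le (Set.Finite.bddBelow (Set.finite_range _)) j₀) hαρ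
  · -- the norm equality
    have hmv : ∀ p, 0 ≤ NN.mulVec ξ p := by
      intro p
      rw [Matrix.mulVec, dotProduct]
      exact Finset.sum_nonneg fun q _ => mul_nonneg (hN0 p q) (hξ0 q)
    have h7 : ∑ p, |NN.mulVec ξ p| = ∑ q, (∑ p, NN p q) * ξ q := by
      calc ∑ p, |NN.mulVec ξ p| = ∑ p, NN.mulVec ξ p :=
            Finset.sum_congr rfl fun p _ => abs_of_nonneg (hmv p)
        _ = ∑ p, ∑ q, NN p q * ξ q := rfl
        _ = ∑ q, ∑ p, NN p q * ξ q := Finset.sum_comm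
        _ = ∑ q, (∑ p, NN p q) * ξ q :=
            Finset.sum_congr rfl fun q _ => (Finset.sum_mul _ _ _).symm
    have hind : ∀ a : Fin m × Fin n, ∑ q, (∑ p, NN p q) * (if q = a then (1:ℝ) else 0)
        = ∑ p, NN p a := by
      intro a
      rw [Finset.sum_congr rfl fun q _ => by rw [mul_ite, mul_one, mul_zero]]
      rw [Finset.sum_ite_eq' Finset.univ a fun q => ∑ p, NN p q]
      simp
    have h8 : ∑ q, (∑ p, NN p q) * ξ q
        = t * (∑ p, NN p (z, j₀)) + (1 - t) * (∑ p, NN p (z, j₁)) := by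
      calc ∑ q, (∑ p, NN p q) * ξ q
          = ∑ q, (t * ((∑ p, NN p q) * (if q = (z, j₀) then (1:ℝ) else 0))
              + (1 - t) * ((∑ p, NN p q) * (if q = (z, j₁) then (1:ℝ) else 0))) := by
            refine Finset.sum_congr rfl fun q _ => ?_
            simp only [hξ]
            ring
        _ = t * ∑ q, (∑ p, NN p q) * (if q = (z, j₀) then (1:ℝ) else 0)
            + (1 - t) * ∑ q, (∑ p, NN p q) * (if q = (z, j₁) then (1:ℝ) else 0) := by
            rw [Finset.sum_add_distrib, Finset.mul_sum, Finset.mul_sum]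
        _ = _ := by rw [hind, hind]
    rw [h7, h8, htot j₀, htot j₁]
    exact hcomb.symm
  · -- upper bound
    exact le_trans hρβ (le_ciSup (Set.Finite.bddAbove (Set.finite_range _)) j₁)
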